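/- Let q ∈ ℂ with |q| < 1, k ≥ 1, d odd, χ : ℕ → ℂ d-periodic, x ∈ ℕ, and m ∈ ℕ with m ≥ k. Define E_{l,χ,q}^{(0,k)}(x) = 2^k ∑_{m_1,…,m_k=0}^∞ (∏_{j=1}^k χ(m_j)(−1)^{m_j} q^{−j m_j}) [x+m_1+⋯+m_k]_q^l, assuming the series converges (e.g. interpret it as the finite-sum formula from Theorem 2 with h = 0). Then 2^k q^{mx} ∑_{a_1,…,a_k=0}^{d−1} (∏_j χ(a_j)) q^{∑_j (m−j)a_j} (−1)^{∑_j a_j} / (−q^{d(m−k)} : q^d)_k = ∑_{l=0}^m C(m,l) (q−1)^l E_{l,χ,q}^{(0,k)}(x), where E_{l,χ,q}^{(0,k)}(x) is given by its closed finite-sum expression ∑_{a_1,…,a_k=0}^{d−1}(∏χ(a_i))(−1)^{∑a_j} q^{−∑_j j a_j} (2^k/(1−q)^l) ∑_{i=0}^l C(l,i)(−1)^i q^{i(x+∑ a_j)}/(−q^{d(i−k)} : q^d)_k. -/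

import Mathlib

open Finset

lemma alt_sum (n : ℕ) :
    ∑ j ∈ Finset.range (n + 1), (n.choose j : ℂ) * (-1) ^ j =
      if n = 0 then 1 else 0 := by
  have h := add_pow (-1 : ℂ) 1 n
  simp only [one_pow, mul_one, neg_add_cancel] at h
  rw [zero_pow_eq] at h
  rw [show ∑ j ∈ Finset.range (n + 1), (n.choose j : ℂ) * (-1) ^ j
      = ∑ j ∈ Finset.range (n + 1), (-1 : ℂ) ^ j * (n.choose j : ℂ) from
    Finset.sum_congr rfl fun j _ => by ring, ← h]

lemma inversion (f : ℕ → ℂ) (m : ℕ) :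
    ∑ l ∈ Finset.range (m + 1), ∑ i ∈ Finset.range (l + 1),
      (m.choose l : ℂ) * (l.choose i) * (-1) ^ (l + i) * f i = f m := by
  have hext : ∀ l ∈ Finset.range (m + 1),
      ∑ i ∈ Finset.range (l + 1), (m.choose l : ℂ) * (l.choose i) * (-1) ^ (l + i) * f i
        = ∑ i ∈ Finset.range (m + 1), (m.choose l : ℂ) * (l.choose i) * (-1) ^ (l + i) * f i := by
    intro l hl
    simp only [Finset.mem_range] at hl
    apply Finset.sum_subset
    · intro i hi; simp only [Finset.mem_range] at hi ⊢; omega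
    · intro i _ hi
      simp only [Finset.mem_range, not_lt] at hi
      rw [show l.choose i = 0 from Nat.choose_eq_zero_of_lt (by omega)]
      simp
  rw [Finset.sum_congr rfl hext, Finset.sum_comm]
  have key : ∀ i ∈ Finset.range (m + 1),
      ∑ l ∈ Finset.range (m + 1), (m.choose l : ℂ) * (l.choose i) * (-1) ^ (l + i) * f i
        = (if i = m then 1 else 0) * f m := by
    intro i hi
    simp only [Finset.mem_range] at hi
    have hi' : i ≤ m := by omega
    have h1 : ∑ l ∈ Finset.range (m + 1), (m.choose l : ℂ) * (l.choose i) * (-1) ^ (l + i) * f i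
        = ∑ l ∈ Finset.Ico i (m + 1), (m.choose l : ℂ) * (l.choose i) * (-1) ^ (l + i) * f i := by
      rw [Finset.range_eq_Ico,
        ← Finset.sum_Ico_consecutive _ (Nat.zero_le i) (by omega : i ≤ m + 1)]
      have hz : ∑ l ∈ Finset.Ico 0 i, (m.choose l : ℂ) * (l.choose i) * (-1) ^ (l + i) * f i = 0 := by
        apply Finset.sum_eq_zero
        intro l hl
        simp only [Finset.mem_Ico] at hl
        rw [show l.choose i = 0 from Nat.choose_eq_zero_of_lt (by omega)]
        simp
      rw [hz, zero_add]
    rw [h1, Finset.sum_Ico_eq_sum_range]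
    have h2 : ∀ j ∈ Finset.range (m + 1 - i),
        ((m.choose (i + j) : ℂ) * ((i + j).choose i) * (-1) ^ (i + j + i) * f i)
          = ((m.choose i : ℂ) * ((m - i).choose j) * (-1) ^ j) * f i := by
      intro j hj
      simp only [Finset.mem_range] at hj
      have hc := Nat.choose_mul (n := m) (k := i + j) (s := i) (by omega)
      rw [Nat.add_sub_cancel_left] at hc
      have hc' : (m.choose (i + j) : ℂ) * ((i + j).choose i)
          = (m.choose i : ℂ) * ((m - i).choose j) := by exact_mod_cast congrArg (Nat.cast : ℕ → ℂ) hc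
      rw [show (-1 : ℂ) ^ (i + j + i) = (-1) ^ j by
        rw [show i + j + i = 2 * i + j by ring, pow_add, pow_mul]; simp]
      rw [hc']
    rw [Finset.sum_congr rfl h2, ← Finset.sum_mul]
    have h3 : ∑ j ∈ Finset.range (m + 1 - i), (m.choose i : ℂ) * ((m - i).choose j) * (-1) ^ j
        = (m.choose i : ℂ) * (if m - i = 0 then 1 else 0) := by
      rw [show m + 1 - i = (m - i) + 1 by omega]
      rw [← alt_sum (m - i), Finset.mul_sum]
      exact Finset.sum_congr rfl fun j _ => by ring
    rw [h3]
    by_cases h : i = m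
    · subst h; simp
    · rw [if_neg (by omega : ¬ m - i = 0), if_neg h]; simp
  rw [Finset.sum_congr rfl key]
  simp [ite_mul]

lemma key_sum (q : ℂ) (hq1 : q ≠ 1) (m k Y : ℕ) (A : ℂ) (D : ℕ → ℂ) :
    ∑ l ∈ Finset.range (m + 1), (m.choose l : ℂ) * (q - 1) ^ l *
      (A * ((2 ^ k / (1 - q) ^ l) *
        ∑ i ∈ Finset.range (l + 1), (l.choose i : ℂ) * (-1) ^ i * q ^ (i * Y) / D i))
    = A * (2 ^ k * (q ^ (m * Y) / D m)) := by
  have h0 : (1 - q : ℂ) ≠ 0 := sub_ne_zero.mpr fun h => hq1 h.symm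
  set g : ℕ → ℂ := fun i => q ^ (i * Y) / D i with hg
  have h1 : ∀ l ∈ Finset.range (m + 1),
      (m.choose l : ℂ) * (q - 1) ^ l *
        (A * ((2 ^ k / (1 - q) ^ l) *
          ∑ i ∈ Finset.range (l + 1), (l.choose i : ℂ) * (-1) ^ i * q ^ (i * Y) / D i))
      = (2 ^ k * A) * ∑ i ∈ Finset.range (l + 1),
          (m.choose l : ℂ) * (l.choose i) * (-1) ^ (l + i) * g i := by
    intro l _
    have hql : ((q - 1 : ℂ) ^ l) * (2 ^ k / (1 - q) ^ l) = (-1) ^ l * 2 ^ k := by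
      rw [show (q - 1 : ℂ) = -(1 - q) by ring, neg_pow, mul_assoc]
      congr 1
      rw [mul_comm, div_mul_cancel₀ _ (pow_ne_zero l h0)]
    have hS : ∑ i ∈ Finset.range (l + 1), (l.choose i : ℂ) * (-1) ^ i * q ^ (i * Y) / D i
        = ∑ i ∈ Finset.range (l + 1), (l.choose i : ℂ) * (-1) ^ i * g i :=
      Finset.sum_congr rfl fun i _ => by rw [hg, mul_div_assoc]
    have hS2 : ∑ i ∈ Finset.range (l + 1),
        (m.choose l : ℂ) * (l.choose i) * (-1) ^ (l + i) * g i
        = ((m.choose l : ℂ) * (-1) ^ l) * ∑ i ∈ Finset.range (l + 1),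
            (l.choose i : ℂ) * (-1) ^ i * g i := by
      rw [Finset.mul_sum]
      exact Finset.sum_congr rfl fun i _ => by rw [pow_add]; ring
    rw [hS, hS2]
    set S := ∑ i ∈ Finset.range (l + 1), (l.choose i : ℂ) * (-1) ^ i * g i with hSdef
    linear_combination (A * (m.choose l : ℂ) * S) * hql
  rw [Finset.sum_congr rfl h1, ← Finset.mul_sum, inversion g m, hg]
  ring


/-- Theorem 3: for `|q| < 1` (`q ≠ 0`), `k ≥ 1`, `d` odd, `χ` `d`-periodic, `x ∈ ℕ`,
`m ≥ k`, and assuming the denominators `(−q^{d(i−k)} : q^d)_k` are nonzero,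
`2^k q^{mx} ∑_{a⃗∈[0,d)^k} (∏χ(a_j)) q^{Σ(m−j)a_j} (−1)^{Σa} / (−q^{d(m−k)} : q^d)_k
  = ∑_{l≤m} C(m,l)(q−1)^l E_{l,χ,q}^{(0,k)}(x)`,
where `E_{l,χ,q}^{(0,k)}(x)` is given by its closed finite-sum expression
`∑_{a⃗} (∏χ(aᵢ))(−1)^{Σa} q^{−Σ j a_j} (2^k/(1−q)^l)
   ∑_{i≤l} C(l,i)(−1)^i q^{i(x+Σa)}/(−q^{d(i−k)} : q^d)_k`. -/
theorem q_power_moment_identity (q : ℂ) (hq : ‖q‖ < 1) (hq0 : q ≠ 0)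
    (d : ℕ) (hd : Odd d) (hd0 : 0 < d) (k : ℕ) (hk : 1 ≤ k)
    (χ : ℕ → ℂ) (hχ : ∀ m, χ (m + d) = χ m) (x m : ℕ) (hm : k ≤ m)
    (hden : ∀ i : ℕ, i ≤ m →
      (∏ j ∈ Finset.range k,
        (1 + q ^ ((d : ℤ) * ((i : ℤ) - (k : ℤ))) * (q ^ d) ^ j)) ≠ 0) :
    2 ^ k * q ^ (m * x) *
        ∑ a : Fin k → Fin d,
          (∏ j, χ (a j)) * q ^ (∑ j : Fin k, (m - ((j : ℕ) + 1)) * (a j : ℕ)) *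
            (-1 : ℂ) ^ (∑ j, (a j : ℕ)) /
              ∏ j ∈ Finset.range k, (1 + q ^ (d * (m - k)) * (q ^ d) ^ j) =
      ∑ l ∈ Finset.range (m + 1), (m.choose l : ℂ) * (q - 1) ^ l *
        ∑ a : Fin k → Fin d,
          (∏ i, χ (a i)) * (-1 : ℂ) ^ (∑ j, (a j : ℕ)) *
            q ^ (-(∑ j : Fin k, ((j : ℕ) + 1) * (a j : ℕ) : ℕ) : ℤ) *
              ((2 ^ k / (1 - q) ^ l) *
                ∑ i ∈ Finset.range (l + 1),
                  (l.choose i : ℂ) * (-1 : ℂ) ^ i * q ^ (i * (x + ∑ j, (a j : ℕ))) /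
                    ∏ j ∈ Finset.range k,
                      (1 + q ^ ((d : ℤ) * ((i : ℤ) - (k : ℤ))) * (q ^ d) ^ j)) := by
  have hq1 : q ≠ 1 := by intro h; rw [h] at hq; simp at hq
  -- define the denominator family
  set D : ℕ → ℂ := fun i => ∏ j ∈ Finset.range k,
      (1 + q ^ ((d : ℤ) * ((i : ℤ) - (k : ℤ))) * (q ^ d) ^ j) with hDdef
  -- nat-power denominator equals D m
  have hD : (∏ j ∈ Finset.range k, (1 + q ^ (d * (m - k)) * (q ^ d) ^ j)) = D m := by
    rw [hDdef]
    refine Finset.prod_congr rfl fun j _ => ?_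
    congr 2
    rw [← zpow_natCast q (d * (m - k))]
    congr 1
    push_cast [Nat.cast_sub hm]
    ring
  -- rewrite RHS using mul_sum and swap sums
  rw [show ∀ (F : ℕ → (Fin k → Fin d) → ℂ),
      (∑ l ∈ Finset.range (m + 1), (m.choose l : ℂ) * (q - 1) ^ l * ∑ a : Fin k → Fin d, F l a)
      = ∑ l ∈ Finset.range (m + 1), ∑ a : Fin k → Fin d,
          (m.choose l : ℂ) * (q - 1) ^ l * F l a from
    fun F => Finset.sum_congr rfl fun l _ => Finset.mul_sum _ _ _]
  rw [Finset.sum_comm, hD, Finset.mul_sum]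
  refine Finset.sum_congr rfl fun a _ => ?_
  -- per-a identity
  set S := ∑ j, (a j : ℕ) with hSdef
  set T := ∑ j : Fin k, ((j : ℕ) + 1) * (a j : ℕ) with hTdef
  set E := ∑ j : Fin k, (m - ((j : ℕ) + 1)) * (a j : ℕ) with hEdef
  rw [key_sum q hq1 m k (x + S) ((∏ i, χ (a i)) * (-1 : ℂ) ^ S * q ^ (-(T : ℕ) : ℤ)) D]
  -- arithmetic of exponents
  have hnat : m * x + E + T = m * (x + S) := by
    rw [hEdef, hTdef, add_assoc, ← Finset.sum_add_distrib]
    have : ∀ j : Fin k, (m - ((j : ℕ) + 1)) * (a j : ℕ) + ((j : ℕ) + 1) * (a j : ℕ)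
        = m * (a j : ℕ) := by
      intro j
      rw [← Nat.add_mul, Nat.sub_add_cancel (by have := j.2; omega)]
    rw [Finset.sum_congr rfl fun j _ => this j, ← Finset.mul_sum, ← hSdef, Nat.mul_add]
  have hqe : q ^ (m * x) * q ^ E = q ^ (m * (x + S)) * (q ^ T)⁻¹ := by
    rw [← hnat, pow_add, pow_add, mul_assoc, mul_inv_cancel₀ (pow_ne_zero T hq0), mul_one]
  have hzT : (q : ℂ) ^ (-(T : ℕ) : ℤ) = (q ^ T)⁻¹ := by
    rw [zpow_neg, zpow_natCast]
  calc 2 ^ k * q ^ (m * x) * ((∏ j, χ (a j)) * q ^ E * (-1 : ℂ) ^ S / D m)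
      = (q ^ (m * x) * q ^ E) * (2 ^ k * (∏ j, χ (a j)) * (-1 : ℂ) ^ S / D m) := by
        ring
    _ = (q ^ (m * (x + S)) * (q ^ T)⁻¹) * (2 ^ k * (∏ j, χ (a j)) * (-1 : ℂ) ^ S / D m) := by
        rw [hqe]
    _ = (∏ i, χ (a i)) * (-1 : ℂ) ^ S * q ^ (-(T : ℕ) : ℤ) *
          (2 ^ k * (q ^ (m * (x + S)) / D m)) := by
        rw [hzT]; ring
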